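/- Let $\Phi$ be an $m \times n$ real matrix satisfying the $(2K,\delta)$-restricted isometry property with $\delta < 1$. Then for any two $K$-sparse vectors $x, y \in \mathbb{R}^n$ with disjoint supports, $|\langle \Phi x, \Phi y \rangle| \leq \delta \|x\| \, \|y\|$. -/
import Mathlib

open Finset Matrix

lemma sparse_add_card {n K : ℕ} (x y : Fin n → ℝ)
    (hx : (Finset.univ.filter (fun i => x i ≠ 0)).card ≤ K)
    (hy : (Finset.univ.filter (fun i => y i ≠ 0)).card ≤ K) :
    (Finset.univ.filter (fun i => x i + y i ≠ 0)).card ≤ 2 * K := by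
  have hsub : (Finset.univ.filter (fun i => x i + y i ≠ 0)) ⊆
      (Finset.univ.filter (fun i => x i ≠ 0)) ∪ (Finset.univ.filter (fun i => y i ≠ 0)) := by
    intro i hi
    simp only [mem_filter, mem_union, mem_univ, true_and] at *
    by_contra h
    push_neg at h
    exact hi (by rw [h.1, h.2]; ring)
  calc _ ≤ _ := Finset.card_le_card hsub
    _ ≤ _ := Finset.card_union_le _ _
    _ ≤ 2 * K := by omega

lemma rip_aux (m n K : ℕ) (δ : ℝ)
    (Φ : Matrix (Fin m) (Fin n) ℝ)
    (hRIP : ∀ z : Fin n → ℝ,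
      (Finset.univ.filter (fun i => z i ≠ 0)).card ≤ 2 * K →
      (1 - δ) * (z ⬝ᵥ z) ≤ (Φ.mulVec z) ⬝ᵥ (Φ.mulVec z) ∧
        (Φ.mulVec z) ⬝ᵥ (Φ.mulVec z) ≤ (1 + δ) * (z ⬝ᵥ z))
    (x y : Fin n → ℝ)
    (hx : (Finset.univ.filter (fun i => x i ≠ 0)).card ≤ K)
    (hy : (Finset.univ.filter (fun i => y i ≠ 0)).card ≤ K)
    (hdisj : ∀ i, x i = 0 ∨ y i = 0) :
    (Φ.mulVec x) ⬝ᵥ (Φ.mulVec y) ≤ δ * (x ⬝ᵥ x + y ⬝ᵥ y) / 2 := by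
  have hxy0 : x ⬝ᵥ y = 0 := by
    apply Finset.sum_eq_zero
    intro i _
    rcases hdisj i with h | h <;> simp [h]
  have h1 := hRIP (x + y) (by simpa using sparse_add_card x y hx hy)
  have h2 := hRIP (x - y) (by
    have := sparse_add_card x (-y) hx (by simpa using hy)
    simpa [sub_eq_add_neg] using this)
  have e1 : Φ.mulVec (x + y) ⬝ᵥ Φ.mulVec (x + y) =
      Φ.mulVec x ⬝ᵥ Φ.mulVec x + 2 * (Φ.mulVec x ⬝ᵥ Φ.mulVec y) + Φ.mulVec y ⬝ᵥ Φ.mulVec y := by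
    rw [mulVec_add, add_dotProduct, dotProduct_add, dotProduct_add,
      dotProduct_comm (Φ.mulVec y) (Φ.mulVec x)]
    ring
  have e2 : Φ.mulVec (x - y) ⬝ᵥ Φ.mulVec (x - y) =
      Φ.mulVec x ⬝ᵥ Φ.mulVec x - 2 * (Φ.mulVec x ⬝ᵥ Φ.mulVec y) + Φ.mulVec y ⬝ᵥ Φ.mulVec y := by
    rw [mulVec_sub, sub_dotProduct, dotProduct_sub, dotProduct_sub,
      dotProduct_comm (Φ.mulVec y) (Φ.mulVec x)]
    ring
  have e3 : (x + y) ⬝ᵥ (x + y) = x ⬝ᵥ x + y ⬝ᵥ y := by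
    rw [add_dotProduct, dotProduct_add, dotProduct_add, dotProduct_comm y x]
    rw [hxy0]; ring
  have e4 : (x - y) ⬝ᵥ (x - y) = x ⬝ᵥ x + y ⬝ᵥ y := by
    rw [sub_dotProduct, dotProduct_sub, dotProduct_sub, dotProduct_comm y x]
    rw [hxy0]; ring
  rw [e1, e3] at h1
  rw [e2, e4] at h2
  linarith [h1.2, h2.1]

lemma rip_aux_abs (m n K : ℕ) (δ : ℝ)
    (Φ : Matrix (Fin m) (Fin n) ℝ)
    (hRIP : ∀ z : Fin n → ℝ,
      (Finset.univ.filter (fun i => z i ≠ 0)).card ≤ 2 * K →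
      (1 - δ) * (z ⬝ᵥ z) ≤ (Φ.mulVec z) ⬝ᵥ (Φ.mulVec z) ∧
        (Φ.mulVec z) ⬝ᵥ (Φ.mulVec z) ≤ (1 + δ) * (z ⬝ᵥ z))
    (x y : Fin n → ℝ)
    (hx : (Finset.univ.filter (fun i => x i ≠ 0)).card ≤ K)
    (hy : (Finset.univ.filter (fun i => y i ≠ 0)).card ≤ K)
    (hdisj : ∀ i, x i = 0 ∨ y i = 0) :
    |(Φ.mulVec x) ⬝ᵥ (Φ.mulVec y)| ≤ δ * (x ⬝ᵥ x + y ⬝ᵥ y) / 2 := by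
  rw [abs_le]
  constructor
  · have := rip_aux m n K δ Φ hRIP x (-y) hx (by simpa using hy)
      (fun i => by rcases hdisj i with h | h <;> simp [h])
    have hy2 : (-y : Fin n → ℝ) ⬝ᵥ (-y) = y ⬝ᵥ y := by simp
    rw [mulVec_neg, dotProduct_neg, hy2] at this
    linarith
  · exact rip_aux m n K δ Φ hRIP x y hx hy hdisj

/-- If `Φ` satisfies the `(2K, δ)`-RIP (squared-norm form) with `δ < 1`, then for any two
`K`-sparse vectors `x, y` with disjoint supports, `|⟨Φx, Φy⟩| ≤ δ ‖x‖ ‖y‖`. -/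
theorem rip_disjoint_inner_bound (m n K : ℕ) (δ : ℝ) (hδ : δ < 1)
    (Φ : Matrix (Fin m) (Fin n) ℝ)
    (hRIP : ∀ z : Fin n → ℝ,
      (Finset.univ.filter (fun i => z i ≠ 0)).card ≤ 2 * K →
      (1 - δ) * (z ⬝ᵥ z) ≤ (Φ.mulVec z) ⬝ᵥ (Φ.mulVec z) ∧
        (Φ.mulVec z) ⬝ᵥ (Φ.mulVec z) ≤ (1 + δ) * (z ⬝ᵥ z))
    (x y : Fin n → ℝ)
    (hx : (Finset.univ.filter (fun i => x i ≠ 0)).card ≤ K)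
    (hy : (Finset.univ.filter (fun i => y i ≠ 0)).card ≤ K)
    (hdisj : ∀ i, x i = 0 ∨ y i = 0) :
    |(Φ.mulVec x) ⬝ᵥ (Φ.mulVec y)| ≤ δ * Real.sqrt (x ⬝ᵥ x) * Real.sqrt (y ⬝ᵥ y) := by
  have hXnn : (0:ℝ) ≤ x ⬝ᵥ x := Finset.sum_nonneg fun i _ => mul_self_nonneg _
  have hYnn : (0:ℝ) ≤ y ⬝ᵥ y := Finset.sum_nonneg fun i _ => mul_self_nonneg _
  rcases eq_or_lt_of_le hXnn with hX0 | hXpos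
  · -- x = 0
    have hx0 : x = 0 := by
      funext i
      have := (Finset.sum_eq_zero_iff_of_nonneg (fun j (_ : j ∈ Finset.univ) => mul_self_nonneg (x j))).mp hX0.symm i (Finset.mem_univ i)
      exact mul_self_eq_zero.mp this
    simp [hx0, ← hX0]
  rcases eq_or_lt_of_le hYnn with hY0 | hYpos
  · have hy0 : y = 0 := by
      funext i
      have := (Finset.sum_eq_zero_iff_of_nonneg (fun j (_ : j ∈ Finset.univ) => mul_self_nonneg (y j))).mp hY0.symm i (Finset.mem_univ i)
      exact mul_self_eq_zero.mp this
    simp [hy0, ← hY0]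
  · set X := x ⬝ᵥ x
    set Y := y ⬝ᵥ y
    have hsX : (0:ℝ) < Real.sqrt X := Real.sqrt_pos.mpr hXpos
    have hsY : (0:ℝ) < Real.sqrt Y := Real.sqrt_pos.mpr hYpos
    set c : ℝ := Real.sqrt (Real.sqrt Y / Real.sqrt X) with hc
    have hcpos : 0 < c := Real.sqrt_pos.mpr (by positivity)
    have hc2 : c ^ 2 = Real.sqrt Y / Real.sqrt X := Real.sq_sqrt (by positivity)
    have key := rip_aux_abs m n K δ Φ hRIP (c • x) (c⁻¹ • y)
      (by
        have : (Finset.univ.filter (fun i => (c • x) i ≠ 0)) =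
            (Finset.univ.filter (fun i => x i ≠ 0)) := by
          apply Finset.filter_congr
          intro i _
          simp [Pi.smul_apply, smul_eq_mul, hcpos.ne']
        rw [this]; exact hx)
      (by
        have : (Finset.univ.filter (fun i => (c⁻¹ • y) i ≠ 0)) =
            (Finset.univ.filter (fun i => y i ≠ 0)) := by
          apply Finset.filter_congr
          intro i _
          simp [Pi.smul_apply, smul_eq_mul, (inv_pos.mpr hcpos).ne']
        rw [this]; exact hy)
      (fun i => by rcases hdisj i with h | h <;> simp [h])
    have eInner : (Φ.mulVec (c • x)) ⬝ᵥ (Φ.mulVec (c⁻¹ • y)) =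
        (Φ.mulVec x) ⬝ᵥ (Φ.mulVec y) := by
      rw [mulVec_smul, mulVec_smul, smul_dotProduct, dotProduct_smul]
      simp [smul_eq_mul, ← mul_assoc, mul_inv_cancel₀ hcpos.ne']
    have eX : (c • x) ⬝ᵥ (c • x) = c ^ 2 * X := by
      rw [smul_dotProduct, dotProduct_smul]; simp [smul_eq_mul]; ring
    have eY : (c⁻¹ • y) ⬝ᵥ (c⁻¹ • y) = (c ^ 2)⁻¹ * Y := by
      rw [smul_dotProduct, dotProduct_smul]; simp [smul_eq_mul]; ring
    rw [eInner, eX, eY, hc2] at key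
    have hXe : X = Real.sqrt X ^ 2 := (Real.sq_sqrt hXnn).symm
    have hYe : Y = Real.sqrt Y ^ 2 := (Real.sq_sqrt hYnn).symm
    have heq : Real.sqrt Y / Real.sqrt X * X + (Real.sqrt Y / Real.sqrt X)⁻¹ * Y =
        2 * (Real.sqrt X * Real.sqrt Y) := by
      field_simp
      nlinarith [Real.sq_sqrt hXnn, Real.sq_sqrt hYnn, hsX, hsY]
    rw [heq] at key
    linarith
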